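/- arXiv:1803.07810 — 3 statements merged into one kernel-verified Lean document; each statement's English description precedes it below -/
import Mathlib

section
/- For the single-qubit Lindbladian L(ρ) := -i[(Δ/2)σ_z + u σ_x, ρ] + Γ D_{σ₋}(ρ), with Γ > 0, the equation L(ρ̄) = 0, Tr(ρ̄) = 1 has a unique Hermitian solution ρ̄ which is a density operator (positive semidefinite with trace one). -/
open Matrix Complex
open scoped ComplexOrder

-- entrywise evaluation of the Lindblad operator on a general 2x2 matrix
lemma stmt10_lop_eval (Δ u Γ : ℝ) (a b c d : ℂ) :
    (-I) • ((((Δ : ℂ) / 2) • !![1, 0; 0, (-1 : ℂ)] + (u : ℂ) • !![0, 1; 1, 0]) * !![a,b;c,d]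
        - !![a,b;c,d] * (((Δ : ℂ) / 2) • !![1, 0; 0, (-1 : ℂ)] + (u : ℂ) • !![0, 1; 1, 0]))
      + (Γ : ℂ) • (!![0,0;1,(0:ℂ)] * !![a,b;c,d] * !![0,0;1,(0:ℂ)]ᴴ
          - (1 / 2 : ℂ) • (!![0,0;1,(0:ℂ)]ᴴ * !![0,0;1,(0:ℂ)] * !![a,b;c,d])
          - (1 / 2 : ℂ) • (!![a,b;c,d] * (!![0,0;1,(0:ℂ)]ᴴ * !![0,0;1,(0:ℂ)])))
    = !![ -I*u*(c - b) - Γ*a, -I*(Δ*b + u*(d-a)) - Γ*b/2;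
          -I*(u*(a-d) - Δ*c) - Γ*c/2, -I*u*(b - c) + Γ*a ] := by
  ext i j
  fin_cases i <;> fin_cases j <;>
    simp [Matrix.mul_apply, Matrix.vecMul, dotProduct, Fin.sum_univ_two, Matrix.vecHead, Matrix.vecTail,
      conjTranspose_apply] <;> ring

-- uniqueness of the solution of the linear system (over ℂ, no hermiticity needed)
lemma stmt10_solve (Δ u Γ : ℝ) (hΓ : 0 < Γ) (a b c d : ℂ)
    (e00 : -I*(u:ℂ)*(c - b) - (Γ:ℂ)*a = 0)
    (e01 : -I*((Δ:ℂ)*b + (u:ℂ)*(d-a)) - (Γ:ℂ)*b/2 = 0)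
    (e10 : -I*((u:ℂ)*(a-d) - (Δ:ℂ)*c) - (Γ:ℂ)*c/2 = 0)
    (htr : a + d = 1) :
    a * ((Γ:ℂ)^2+4*(Δ:ℂ)^2+8*(u:ℂ)^2) = 4*(u:ℂ)^2
    ∧ b * ((Γ:ℂ)^2+4*(Δ:ℂ)^2+8*(u:ℂ)^2) = -4*(u:ℂ)*(Δ:ℂ) - 2*(u:ℂ)*(Γ:ℂ)*I
    ∧ c * ((Γ:ℂ)^2+4*(Δ:ℂ)^2+8*(u:ℂ)^2) = -4*(u:ℂ)*(Δ:ℂ) + 2*(u:ℂ)*(Γ:ℂ)*I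
    ∧ d = 1 - a := by
  have hΓC : (Γ:ℂ) ≠ 0 := by exact_mod_cast hΓ.ne'
  have hb : b * ((Γ:ℂ) + 2*I*(Δ:ℂ)) = -2*I*(u:ℂ)*(1-2*a) := by
    linear_combination (-2 : ℂ)*e01 - 2*I*(u:ℂ)*htr
  have hc : c * ((Γ:ℂ) - 2*I*(Δ:ℂ)) = 2*I*(u:ℂ)*(1-2*a) := by
    linear_combination (-2 : ℂ)*e10 + 2*I*(u:ℂ)*htr
  have ha : a * ((Γ:ℂ)^2+4*(Δ:ℂ)^2+8*(u:ℂ)^2) * (Γ:ℂ) = 4*(u:ℂ)^2*(Γ:ℂ) := by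
    linear_combination (I*(u:ℂ)*((Γ:ℂ)-2*I*(Δ:ℂ))) * hb
      + (-(I*(u:ℂ)*((Γ:ℂ)+2*I*(Δ:ℂ)))) * hc
      + (-((Γ:ℂ)^2+4*(Δ:ℂ)^2)) * e00
      + (4*I*(u:ℂ)*(Δ:ℂ)^2*(b-c) - 4*(u:ℂ)^2*(Γ:ℂ)*(1-2*a)) * Complex.I_sq
  have ha' : a * ((Γ:ℂ)^2+4*(Δ:ℂ)^2+8*(u:ℂ)^2) = 4*(u:ℂ)^2 :=
    mul_right_cancel₀ hΓC ha
  have hΓ2 : ((Γ:ℂ) + 2*I*(Δ:ℂ)) ≠ 0 := by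
    intro h
    have := congrArg Complex.re h
    simp at this
    linarith
  have hΓ3 : ((Γ:ℂ) - 2*I*(Δ:ℂ)) ≠ 0 := by
    intro h
    have := congrArg Complex.re h
    simp at this
    linarith
  refine ⟨ha', ?_, ?_, by linear_combination htr⟩
  · refine mul_right_cancel₀ hΓ2 ?_
    show (b * ((Γ:ℂ)^2+4*(Δ:ℂ)^2+8*(u:ℂ)^2)) * ((Γ:ℂ) + 2*I*(Δ:ℂ))
        = (-4*(u:ℂ)*(Δ:ℂ) - 2*(u:ℂ)*(Γ:ℂ)*I) * ((Γ:ℂ) + 2*I*(Δ:ℂ))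
    linear_combination ((Γ:ℂ)^2+4*(Δ:ℂ)^2+8*(u:ℂ)^2) * hb + 4*I*(u:ℂ)*ha'
      + (4*(u:ℂ)*(Γ:ℂ)*(Δ:ℂ)) * Complex.I_sq
  · refine mul_right_cancel₀ hΓ3 ?_
    show (c * ((Γ:ℂ)^2+4*(Δ:ℂ)^2+8*(u:ℂ)^2)) * ((Γ:ℂ) - 2*I*(Δ:ℂ))
        = (-4*(u:ℂ)*(Δ:ℂ) + 2*(u:ℂ)*(Γ:ℂ)*I) * ((Γ:ℂ) - 2*I*(Δ:ℂ))
    linear_combination ((Γ:ℂ)^2+4*(Δ:ℂ)^2+8*(u:ℂ)^2) * hc - 4*I*(u:ℂ)*ha'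
      + (4*(u:ℂ)*(Γ:ℂ)*(Δ:ℂ)) * Complex.I_sq
/-- For the single-qubit Lindbladian
`L(ρ) = -i[(Δ/2)σ_z + u σ_x, ρ] + Γ D_{σ₋}(ρ)` with `Γ > 0`, there is a unique
Hermitian trace-one solution of `L(ρ̄) = 0`, and it is a density operator
(positive semidefinite). -/
theorem stmt_10 (Δ u Γ : ℝ) (hΓ : 0 < Γ) :
    let σx : Matrix (Fin 2) (Fin 2) ℂ := !![0, 1; 1, 0]
    let σy : Matrix (Fin 2) (Fin 2) ℂ := !![0, -I; I, 0]
    let σz : Matrix (Fin 2) (Fin 2) ℂ := !![1, 0; 0, -1]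
    let σm : Matrix (Fin 2) (Fin 2) ℂ := (1 / 2 : ℂ) • (σx - I • σy)
    let H : Matrix (Fin 2) (Fin 2) ℂ := ((Δ : ℂ) / 2) • σz + (u : ℂ) • σx
    let Lop : Matrix (Fin 2) (Fin 2) ℂ → Matrix (Fin 2) (Fin 2) ℂ := fun ρ =>
      (-I) • (H * ρ - ρ * H)
        + (Γ : ℂ) • (σm * ρ * σmᴴ - (1 / 2 : ℂ) • (σmᴴ * σm * ρ)
            - (1 / 2 : ℂ) • (ρ * (σmᴴ * σm)))
    (∃! ρbar : Matrix (Fin 2) (Fin 2) ℂ,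
        ρbar.IsHermitian ∧ Lop ρbar = 0 ∧ ρbar.trace = 1)
    ∧ ∀ ρbar : Matrix (Fin 2) (Fin 2) ℂ,
        ρbar.IsHermitian → Lop ρbar = 0 → ρbar.trace = 1 → ρbar.PosSemidef := by
  intro σx σy σz σm H Lop
  have hσm : σm = !![(0:ℂ),0;1,0] := by
    show (1 / 2 : ℂ) • (!![0, 1; 1, 0] - I • !![0, -I; I, 0]) = _
    ext i j
    fin_cases i <;> fin_cases j <;> simp <;> ring_nf
  have hH : H = ((Δ : ℂ) / 2) • !![1, 0; 0, (-1 : ℂ)] + (u : ℂ) • !![0, 1; 1, 0] := rfl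
  have hL : ∀ ρ : Matrix (Fin 2) (Fin 2) ℂ, Lop ρ =
      !![ -I*(u:ℂ)*(ρ 1 0 - ρ 0 1) - (Γ:ℂ)*ρ 0 0,
          -I*((Δ:ℂ)*ρ 0 1 + (u:ℂ)*(ρ 1 1 - ρ 0 0)) - (Γ:ℂ)*ρ 0 1/2;
          -I*((u:ℂ)*(ρ 0 0 - ρ 1 1) - (Δ:ℂ)*ρ 1 0) - (Γ:ℂ)*ρ 1 0/2,
          -I*(u:ℂ)*(ρ 0 1 - ρ 1 0) + (Γ:ℂ)*ρ 0 0 ] := by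
    intro ρ
    show (-I) • (H * ρ - ρ * H)
        + (Γ : ℂ) • (σm * ρ * σmᴴ - (1 / 2 : ℂ) • (σmᴴ * σm * ρ)
            - (1 / 2 : ℂ) • (ρ * (σmᴴ * σm))) = _
    rw [hσm, hH]
    conv_lhs => rw [Matrix.eta_fin_two ρ]
    exact stmt10_lop_eval Δ u Γ _ _ _ _
  have hDR : (0:ℝ) < Γ^2+4*Δ^2+8*u^2 := by positivity
  have hDC : ((Γ:ℂ))^2+4*(Δ:ℂ)^2+8*(u:ℂ)^2 ≠ 0 := by
    have h1 : ((Γ^2+4*Δ^2+8*u^2 : ℝ):ℂ) ≠ 0 := by exact_mod_cast hDR.ne'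
    push_cast at h1; exact h1
  set ρs : Matrix (Fin 2) (Fin 2) ℂ :=
    !![((4*u^2/(Γ^2+4*Δ^2+8*u^2):ℝ):ℂ),
       ((-4*u*Δ/(Γ^2+4*Δ^2+8*u^2):ℝ):ℂ) + ((-2*u*Γ/(Γ^2+4*Δ^2+8*u^2):ℝ):ℂ)*I;
       ((-4*u*Δ/(Γ^2+4*Δ^2+8*u^2):ℝ):ℂ) - ((-2*u*Γ/(Γ^2+4*Δ^2+8*u^2):ℝ):ℂ)*I,
       ((1-4*u^2/(Γ^2+4*Δ^2+8*u^2):ℝ):ℂ)] with hρs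
  have key : ∀ ρ : Matrix (Fin 2) (Fin 2) ℂ, Lop ρ = 0 → ρ.trace = 1 → ρ = ρs := by
    intro ρ h0 htr
    rw [hL ρ] at h0
    have e00 : -I*(u:ℂ)*(ρ 1 0 - ρ 0 1) - (Γ:ℂ)*ρ 0 0 = 0 := by
      simpa using congrFun (congrFun h0 0) 0
    have e01 : -I*((Δ:ℂ)*ρ 0 1 + (u:ℂ)*(ρ 1 1 - ρ 0 0)) - (Γ:ℂ)*ρ 0 1/2 = 0 := by
      simpa using congrFun (congrFun h0 0) 1
    have e10 : -I*((u:ℂ)*(ρ 0 0 - ρ 1 1) - (Δ:ℂ)*ρ 1 0) - (Γ:ℂ)*ρ 1 0/2 = 0 := by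
      simpa using congrFun (congrFun h0 1) 0
    have htr' : ρ 0 0 + ρ 1 1 = 1 := by
      rw [Matrix.trace_fin_two] at htr; exact htr
    obtain ⟨ha, hb, hc, hd⟩ := stmt10_solve Δ u Γ hΓ _ _ _ _ e00 e01 e10 htr'
    ext i j
    fin_cases i <;> fin_cases j
    · show ρ 0 0 = ((4*u^2/(Γ^2+4*Δ^2+8*u^2):ℝ):ℂ)
      rw [(eq_div_iff hDC).mpr ha]
      push_cast
      ring
    · show ρ 0 1 = ((-4*u*Δ/(Γ^2+4*Δ^2+8*u^2):ℝ):ℂ) + ((-2*u*Γ/(Γ^2+4*Δ^2+8*u^2):ℝ):ℂ)*I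
      rw [(eq_div_iff hDC).mpr hb]
      push_cast
      ring
    · show ρ 1 0 = ((-4*u*Δ/(Γ^2+4*Δ^2+8*u^2):ℝ):ℂ) - ((-2*u*Γ/(Γ^2+4*Δ^2+8*u^2):ℝ):ℂ)*I
      rw [(eq_div_iff hDC).mpr hc]
      push_cast
      ring
    · show ρ 1 1 = ((1-4*u^2/(Γ^2+4*Δ^2+8*u^2):ℝ):ℂ)
      rw [hd, (eq_div_iff hDC).mpr ha]
      push_cast
      ring
  have hherm : ρs.IsHermitian := by
    show ρsᴴ = ρs
    ext i j
    fin_cases i <;> fin_cases j <;>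
      simp [hρs, Matrix.conjTranspose_apply, Complex.conj_ofReal] <;> ring
  have htrs : ρs.trace = 1 := by
    rw [Matrix.trace_fin_two]
    show ((4*u^2/(Γ^2+4*Δ^2+8*u^2):ℝ):ℂ) + ((1-4*u^2/(Γ^2+4*Δ^2+8*u^2):ℝ):ℂ) = 1
    push_cast
    ring
  have hAa : ((4*u^2/(Γ^2+4*Δ^2+8*u^2):ℝ):ℂ) * ((Γ:ℂ)^2+4*(Δ:ℂ)^2+8*(u:ℂ)^2)
      = 4*(u:ℂ)^2 := by
    push_cast; rw [div_mul_cancel₀ _ hDC]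
  have hPb : ((-4*u*Δ/(Γ^2+4*Δ^2+8*u^2):ℝ):ℂ) * ((Γ:ℂ)^2+4*(Δ:ℂ)^2+8*(u:ℂ)^2)
      = -4*(u:ℂ)*(Δ:ℂ) := by
    push_cast; rw [div_mul_cancel₀ _ hDC]
  have hQb : ((-2*u*Γ/(Γ^2+4*Δ^2+8*u^2):ℝ):ℂ) * ((Γ:ℂ)^2+4*(Δ:ℂ)^2+8*(u:ℂ)^2)
      = -2*(u:ℂ)*(Γ:ℂ) := by
    push_cast; rw [div_mul_cancel₀ _ hDC]
  have hDd : ((1-4*u^2/(Γ^2+4*Δ^2+8*u^2):ℝ):ℂ) * ((Γ:ℂ)^2+4*(Δ:ℂ)^2+8*(u:ℂ)^2)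
      = (Γ:ℂ)^2+4*(Δ:ℂ)^2+4*(u:ℂ)^2 := by
    push_cast; rw [sub_mul, div_mul_cancel₀ _ hDC]; ring
  have hLs : Lop ρs = 0 := by
    rw [hL ρs]
    ext i j
    fin_cases i <;> fin_cases j
    · show -I*(u:ℂ)*((((-4*u*Δ/(Γ^2+4*Δ^2+8*u^2):ℝ):ℂ) - ((-2*u*Γ/(Γ^2+4*Δ^2+8*u^2):ℝ):ℂ)*I)
            - (((-4*u*Δ/(Γ^2+4*Δ^2+8*u^2):ℝ):ℂ) + ((-2*u*Γ/(Γ^2+4*Δ^2+8*u^2):ℝ):ℂ)*I))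
          - (Γ:ℂ)*((4*u^2/(Γ^2+4*Δ^2+8*u^2):ℝ):ℂ) = 0
      refine (mul_eq_zero.mp ?_).resolve_right hDC
      linear_combination (2*(u:ℂ)*I^2)*hQb - (Γ:ℂ)*hAa + (-4*(u:ℂ)^2*(Γ:ℂ))*Complex.I_sq
    · show -I*((Δ:ℂ)*(((-4*u*Δ/(Γ^2+4*Δ^2+8*u^2):ℝ):ℂ) + ((-2*u*Γ/(Γ^2+4*Δ^2+8*u^2):ℝ):ℂ)*I)
            + (u:ℂ)*(((1-4*u^2/(Γ^2+4*Δ^2+8*u^2):ℝ):ℂ) - ((4*u^2/(Γ^2+4*Δ^2+8*u^2):ℝ):ℂ)))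
          - (Γ:ℂ)*(((-4*u*Δ/(Γ^2+4*Δ^2+8*u^2):ℝ):ℂ) + ((-2*u*Γ/(Γ^2+4*Δ^2+8*u^2):ℝ):ℂ)*I)/2 = 0
      refine (mul_eq_zero.mp ?_).resolve_right hDC
      linear_combination (-I*(Δ:ℂ) - (Γ:ℂ)/2)*hPb + (-I*(Δ:ℂ)*I - (Γ:ℂ)*I/2)*hQb
        + (-I*(u:ℂ))*hDd + (I*(u:ℂ))*hAa + (2*(u:ℂ)*(Δ:ℂ)*(Γ:ℂ))*Complex.I_sq
    · show -I*((u:ℂ)*(((4*u^2/(Γ^2+4*Δ^2+8*u^2):ℝ):ℂ) - ((1-4*u^2/(Γ^2+4*Δ^2+8*u^2):ℝ):ℂ))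
            - (Δ:ℂ)*(((-4*u*Δ/(Γ^2+4*Δ^2+8*u^2):ℝ):ℂ) - ((-2*u*Γ/(Γ^2+4*Δ^2+8*u^2):ℝ):ℂ)*I))
          - (Γ:ℂ)*(((-4*u*Δ/(Γ^2+4*Δ^2+8*u^2):ℝ):ℂ) - ((-2*u*Γ/(Γ^2+4*Δ^2+8*u^2):ℝ):ℂ)*I)/2 = 0
      refine (mul_eq_zero.mp ?_).resolve_right hDC
      linear_combination (I*(Δ:ℂ) - (Γ:ℂ)/2)*hPb + (-I*(Δ:ℂ)*I + (Γ:ℂ)*I/2)*hQb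
        + (I*(u:ℂ))*hDd + (-I*(u:ℂ))*hAa + (2*(u:ℂ)*(Δ:ℂ)*(Γ:ℂ))*Complex.I_sq
    · show -I*(u:ℂ)*((((-4*u*Δ/(Γ^2+4*Δ^2+8*u^2):ℝ):ℂ) + ((-2*u*Γ/(Γ^2+4*Δ^2+8*u^2):ℝ):ℂ)*I)
            - (((-4*u*Δ/(Γ^2+4*Δ^2+8*u^2):ℝ):ℂ) - ((-2*u*Γ/(Γ^2+4*Δ^2+8*u^2):ℝ):ℂ)*I))
          + (Γ:ℂ)*((4*u^2/(Γ^2+4*Δ^2+8*u^2):ℝ):ℂ) = 0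
      refine (mul_eq_zero.mp ?_).resolve_right hDC
      linear_combination (-2*(u:ℂ)*I^2)*hQb + (Γ:ℂ)*hAa + (4*(u:ℂ)^2*(Γ:ℂ))*Complex.I_sq
  have hPSD : ρs.PosSemidef := by
    have hsqpos : 0 < Real.sqrt (Γ^2+4*Δ^2+8*u^2) := Real.sqrt_pos.mpr hDR
    set wC : ℂ := ((Real.sqrt (Γ^2+4*Δ^2+8*u^2):ℝ):ℂ) with hw
    have hwne : wC ≠ 0 := by
      rw [hw]; exact_mod_cast hsqpos.ne'
    have hw2 : wC^2 = (Γ:ℂ)^2+4*(Δ:ℂ)^2+8*(u:ℂ)^2 := by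
      rw [hw, ← Complex.ofReal_pow, Real.sq_sqrt hDR.le]
      push_cast; ring
    set Bc : Matrix (Fin 2) (Fin 2) ℂ :=
      !![2*(u:ℂ), -2*(Δ:ℂ)-(Γ:ℂ)*I; 0, 2*(u:ℂ)] with hBc
    have hBcH : Bcᴴ = !![2*(u:ℂ), 0; -2*(Δ:ℂ)+(Γ:ℂ)*I, 2*(u:ℂ)] := by
      ext i j
      fin_cases i <;> fin_cases j
      · show (starRingEnd ℂ) (2*(u:ℂ)) = 2*(u:ℂ)
        simp [Complex.conj_ofReal, map_ofNat]
      · show (starRingEnd ℂ) ((0:ℂ)) = (0:ℂ)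
        simp
      · show (starRingEnd ℂ) (-2*(Δ:ℂ)-(Γ:ℂ)*I) = -2*(Δ:ℂ)+(Γ:ℂ)*I
        simp [Complex.conj_ofReal, Complex.conj_I, map_ofNat]
        try ring
      · show (starRingEnd ℂ) (2*(u:ℂ)) = 2*(u:ℂ)
        simp [Complex.conj_ofReal, map_ofNat]
    have hCC : Bcᴴ * Bc = ((Γ:ℂ)^2+4*(Δ:ℂ)^2+8*(u:ℂ)^2) • ρs := by
      rw [hBcH, hBc, Matrix.mul_fin_two]
      ext i j
      fin_cases i <;> fin_cases j
      · show 2*(u:ℂ) * (2*(u:ℂ)) + 0 * 0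
            = ((Γ:ℂ)^2+4*(Δ:ℂ)^2+8*(u:ℂ)^2) * ((4*u^2/(Γ^2+4*Δ^2+8*u^2):ℝ):ℂ)
        linear_combination -hAa
      · show 2*(u:ℂ) * (-2*(Δ:ℂ)-(Γ:ℂ)*I) + 0 * (2*(u:ℂ))
            = ((Γ:ℂ)^2+4*(Δ:ℂ)^2+8*(u:ℂ)^2) *
              (((-4*u*Δ/(Γ^2+4*Δ^2+8*u^2):ℝ):ℂ) + ((-2*u*Γ/(Γ^2+4*Δ^2+8*u^2):ℝ):ℂ)*I)
        linear_combination -hPb - I*hQb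
      · show (-2*(Δ:ℂ)+(Γ:ℂ)*I) * (2*(u:ℂ)) + 2*(u:ℂ) * 0
            = ((Γ:ℂ)^2+4*(Δ:ℂ)^2+8*(u:ℂ)^2) *
              (((-4*u*Δ/(Γ^2+4*Δ^2+8*u^2):ℝ):ℂ) - ((-2*u*Γ/(Γ^2+4*Δ^2+8*u^2):ℝ):ℂ)*I)
        linear_combination -hPb + I*hQb
      · show (-2*(Δ:ℂ)+(Γ:ℂ)*I) * (-2*(Δ:ℂ)-(Γ:ℂ)*I) + 2*(u:ℂ) * (2*(u:ℂ))
            = ((Γ:ℂ)^2+4*(Δ:ℂ)^2+8*(u:ℂ)^2) * ((1-4*u^2/(Γ^2+4*Δ^2+8*u^2):ℝ):ℂ)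
        linear_combination -hDd + (-(Γ:ℂ)^2)*Complex.I_sq
    have hstar : star (wC⁻¹) = wC⁻¹ := by
      rw [hw]
      simp [Complex.conj_ofReal, map_ofNat]
    have hBB : (wC⁻¹ • Bc)ᴴ * (wC⁻¹ • Bc) = ρs := by
      rw [Matrix.conjTranspose_smul, Matrix.smul_mul, Matrix.mul_smul, smul_smul, hCC,
        smul_smul, hstar]
      have : wC⁻¹ * wC⁻¹ * ((Γ:ℂ)^2+4*(Δ:ℂ)^2+8*(u:ℂ)^2) = 1 := by
        rw [← hw2]
        field_simp
      rw [this, one_smul]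
    exact hBB ▸ Matrix.posSemidef_conjTranspose_mul_self (wC⁻¹ • Bc)
  refine ⟨⟨ρs, ⟨hherm, hLs, htrs⟩, fun ρ h => key ρ h.2.1 h.2.2⟩, fun ρ _ h0 ht => ?_⟩
  rw [key ρ h0 ht]
  exact hPSD
end

section
/- Let M and R be Hermitian matrices on ℂ^N such that R is positive semidefinite and: (a) for every z with R z = 0 one has z† M z ≥ 0, and (b) for every z with R z = 0 and z† M z = 0 one has M z = 0. Then there exists τ̄ > 0 such that M + τ̄ R is positive semidefinite. -/
open Matrix
open scoped ComplexOrder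

set_option maxHeartbeats 1000000 in
lemma aux_min {N : ℕ} (W : Submodule ℂ (EuclideanSpace ℂ (Fin N)))
    (g : EuclideanSpace ℂ (Fin N) → ℝ) (hg : Continuous g) (h0 : g 0 = 0)
    (hscale : ∀ (c : ℝ) (u : EuclideanSpace ℂ (Fin N)), g ((c : ℂ) • u) = c ^ 2 * g u)
    (hpos : ∀ u ∈ W, u ≠ 0 → 0 < g u) :
    ∃ d : ℝ, 0 < d ∧ ∀ u ∈ W, d * ‖u‖ ^ 2 ≤ g u := by
  rcases eq_or_ne W ⊥ with rfl | hW
  · refine ⟨1, one_pos, fun u hu => ?_⟩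
    rw [(Submodule.mem_bot ℂ).mp hu]
    simp [h0]
  · have : Nontrivial W := Submodule.nontrivial_iff_ne_bot.mpr hW
    have hcomp : IsCompact (Metric.sphere (0 : W) 1) := isCompact_sphere _ _
    have hne : (Metric.sphere (0 : W) 1).Nonempty :=
      NormedSpace.sphere_nonempty.mpr zero_le_one
    have hcont : Continuous fun u : W => g u := hg.comp continuous_subtype_val
    obtain ⟨u₀, hu₀mem, hu₀min⟩ := hcomp.exists_isMinOn hne hcont.continuousOn
    have hu₀norm' : ‖u₀‖ = 1 := mem_sphere_zero_iff_norm.mp hu₀mem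
    have hu₀norm : ‖(u₀ : EuclideanSpace ℂ (Fin N))‖ = 1 := hu₀norm'
    have hu₀ne : (u₀ : EuclideanSpace ℂ (Fin N)) ≠ 0 := by
      intro h; rw [h] at hu₀norm; simp at hu₀norm
    refine ⟨g u₀, hpos _ u₀.2 hu₀ne, fun u hu => ?_⟩
    rcases eq_or_ne u 0 with rfl | hune
    · simp [h0]
    · set c : ℝ := ‖u‖ with hc
      have hcpos : 0 < c := norm_pos_iff.mpr hune
      set w : EuclideanSpace ℂ (Fin N) := ((c⁻¹ : ℝ) : ℂ) • u with hwdef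
      have hwW : w ∈ W := W.smul_mem _ hu
      have hwnorm : ‖w‖ = 1 := by
        rw [hwdef, norm_smul]
        simp only [Complex.norm_real, Real.norm_eq_abs, abs_of_pos (inv_pos.mpr hcpos)]
        rw [← hc, inv_mul_cancel₀ (ne_of_gt hcpos)]
      have hmem : (⟨w, hwW⟩ : W) ∈ Metric.sphere (0 : W) 1 := by
        rw [mem_sphere_zero_iff_norm]
        exact hwnorm
      have hmin : g u₀ ≤ g w := hu₀min hmem
      have huw : u = ((c : ℝ) : ℂ) • w := by
        rw [hwdef, smul_smul, ← Complex.ofReal_mul, mul_inv_cancel₀ (ne_of_gt hcpos)]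
        simp
      calc g u₀ * ‖u‖ ^ 2 = c ^ 2 * g u₀ := by rw [← hc]; ring
        _ ≤ c ^ 2 * g w := by nlinarith [sq_nonneg c]
        _ = g (((c : ℝ) : ℂ) • w) := (hscale c w).symm
        _ = g u := by rw [← huw]

/-- For a Hermitian matrix, conjugating the sesquilinear form swaps arguments. -/
lemma herm_star_dot {n : ℕ} {A : Matrix (Fin n) (Fin n) ℂ} (hA : A.IsHermitian)
    (z w : Fin n → ℂ) :
    star (star z ⬝ᵥ A *ᵥ w) = star w ⬝ᵥ A *ᵥ z := by
  rw [star_dotProduct, star_star, star_mulVec, dotProduct_mulVec, hA.eq]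

/-- Cross terms with kernel vectors vanish for a Hermitian matrix. -/
lemma herm_cross_zero {n : ℕ} {A : Matrix (Fin n) (Fin n) ℂ} (hA : A.IsHermitian)
    {z : Fin n → ℂ} (hz : A *ᵥ z = 0) (w : Fin n → ℂ) :
    star z ⬝ᵥ A *ᵥ w = 0 := by
  rw [← herm_star_dot hA w z, hz, dotProduct_zero, star_zero]

set_option maxHeartbeats 2000000 in
/-- If `M` is Hermitian, `R` positive semidefinite, `z† M z ≥ 0` for all `z ∈ ker R`, and
`M z = 0` whenever `z ∈ ker R` and `z† M z = 0`, then there exists `τ̄ > 0` such that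
`M + τ̄ R` is positive semidefinite. -/
theorem stmt_13 (N : ℕ) (M R : Matrix (Fin N) (Fin N) ℂ)
    (hM : M.IsHermitian) (hR : R.PosSemidef)
    (ha : ∀ z : Fin N → ℂ, R.mulVec z = 0 → (0 : ℂ) ≤ star z ⬝ᵥ M.mulVec z)
    (hb : ∀ z : Fin N → ℂ, R.mulVec z = 0 → star z ⬝ᵥ M.mulVec z = 0 → M.mulVec z = 0) :
    ∃ τ : ℝ, 0 < τ ∧ (M + τ • R).PosSemidef := by
  classical
  set E := EuclideanSpace ℂ (Fin N)
  let e : E ≃ (Fin N → ℂ) := WithLp.equiv 2 (Fin N → ℂ)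
  -- the kernel of R, and the joint kernel, as submodules of E
  set K : Submodule ℂ E := LinearMap.ker (Matrix.toEuclideanLin R) with hKdef
  set K₀ : Submodule ℂ E := K ⊓ LinearMap.ker (Matrix.toEuclideanLin M) with hK₀def
  have hKmem : ∀ u : E, u ∈ K ↔ R *ᵥ e u = 0 := by
    intro u
    rw [hKdef, LinearMap.mem_ker, Matrix.toEuclideanLin_apply]
    exact ⟨fun h => by have := congrArg (WithLp.equiv 2 (Fin N → ℂ)) h; exact this,
      fun h => by rw [show u.ofLp = e u from rfl, h]; rfl⟩
  have hK₀mem : ∀ u : E, u ∈ K₀ ↔ (R *ᵥ e u = 0 ∧ M *ᵥ e u = 0) := by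
    intro u
    rw [hK₀def, Submodule.mem_inf, hKmem, LinearMap.mem_ker, Matrix.toEuclideanLin_apply]
    constructor
    · rintro ⟨h1, h2⟩
      exact ⟨h1, by have := congrArg (WithLp.equiv 2 (Fin N → ℂ)) h2; exact this⟩
    · rintro ⟨h1, h2⟩
      exact ⟨h1, by rw [show u.ofLp = e u from rfl, h2]; rfl⟩
  -- the quadratic forms
  set gM : E → ℝ := fun u => (star (e u) ⬝ᵥ M *ᵥ e u).re with hgM
  set gR : E → ℝ := fun u => (star (e u) ⬝ᵥ R *ᵥ e u).re with hgR
  have hcontM : Continuous gM :=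
    Complex.continuous_re.comp
      (Continuous.congr (continuous_id.inner (𝕜 := ℂ) (Matrix.toEuclideanLin M).toContinuousLinearMap.continuous)
        (fun u => by rw [EuclideanSpace.inner_eq_star_dotProduct, dotProduct_comm]; rfl))
  have hcontR : Continuous gR :=
    Complex.continuous_re.comp
      (Continuous.congr (continuous_id.inner (𝕜 := ℂ) (Matrix.toEuclideanLin R).toContinuousLinearMap.continuous)
        (fun u => by rw [EuclideanSpace.inner_eq_star_dotProduct, dotProduct_comm]; rfl))
  have hscale : ∀ (A : Matrix (Fin N) (Fin N) ℂ) (c : ℝ) (u : E),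
      (star (e ((c:ℂ) • u)) ⬝ᵥ A *ᵥ e ((c:ℂ) • u)).re = c ^ 2 * (star (e u) ⬝ᵥ A *ᵥ e u).re := by
    intro A c u
    have : e ((c:ℂ) • u) = (c:ℂ) • e u := rfl
    rw [this, star_smul, smul_dotProduct, mulVec_smul, dotProduct_smul]
    simp only [smul_eq_mul, star_trivial, RingHom.id_apply, Complex.star_def,
      Complex.conj_ofReal]
    rw [← mul_assoc, ← Complex.ofReal_mul, Complex.mul_re, Complex.ofReal_re,
      Complex.ofReal_im]
    ring
  -- realness of hermitian quadratic values
  have hreal : ∀ (A : Matrix (Fin N) (Fin N) ℂ), A.IsHermitian → ∀ z : Fin N → ℂ,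
      (star z ⬝ᵥ A *ᵥ z).im = 0 := by
    intro A hA z
    have := herm_star_dot hA z z
    exact Complex.conj_eq_iff_im.mp this
  -- positivity on K ⊓ K₀ᗮ
  obtain ⟨d, hd, hdle⟩ : ∃ d : ℝ, 0 < d ∧ ∀ u ∈ K ⊓ K₀ᗮ, d * ‖u‖ ^ 2 ≤ gM u := by
    apply aux_min _ gM hcontM
      (by have h : e 0 = (0 : Fin N → ℂ) := rfl; simp [hgM, h]) (fun c u => hscale M c u)
    intro u hu hune
    obtain ⟨huK, huPerp⟩ := Submodule.mem_inf.mp hu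
    have hRu : R *ᵥ e u = 0 := (hKmem u).mp huK
    have h1 : (0:ℂ) ≤ star (e u) ⬝ᵥ M *ᵥ e u := ha (e u) hRu
    rcases lt_or_eq_of_le ((Complex.nonneg_iff.mp h1).1) with h2 | h2
    · exact h2
    · exfalso
      have hzero : star (e u) ⬝ᵥ M *ᵥ e u = 0 := by
        have him := (Complex.nonneg_iff.mp h1).2
        apply Complex.ext <;> simp [← h2, ← him]
      have hMu : M *ᵥ e u = 0 := hb (e u) hRu hzero
      have huK₀ : u ∈ K₀ := (hK₀mem u).mpr ⟨hRu, hMu⟩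
      exact hune (inner_self_eq_zero.mp ((Submodule.mem_orthogonal' _ _).mp huPerp u huK₀))
  -- positivity on Kᗮ
  obtain ⟨c, hc, hcle⟩ : ∃ c : ℝ, 0 < c ∧ ∀ v ∈ Kᗮ, c * ‖v‖ ^ 2 ≤ gR v := by
    apply aux_min _ gR hcontR
      (by have h : e 0 = (0 : Fin N → ℂ) := rfl; simp [hgR, h]) (fun c u => hscale R c u)
    intro v hv hvne
    have h1 : (0:ℂ) ≤ star (e v) ⬝ᵥ R *ᵥ e v := hR.dotProduct_mulVec_nonneg (e v)
    rcases lt_or_eq_of_le ((Complex.nonneg_iff.mp h1).1) with h2 | h2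
    · exact h2
    · exfalso
      have hzero : star (e v) ⬝ᵥ R *ᵥ e v = 0 := by
        have him := (Complex.nonneg_iff.mp h1).2
        apply Complex.ext <;> simp [← h2, ← him]
      have hRv : R *ᵥ e v = 0 := (hR.dotProduct_mulVec_zero_iff (e v)).mp hzero
      have hvK : v ∈ K := (hKmem v).mpr hRv
      exact hvne (inner_self_eq_zero.mp ((Submodule.mem_orthogonal' _ _).mp hv v hvK))
  -- operator norm bound for M
  set T : E →L[ℂ] E := (Matrix.toEuclideanLin M).toContinuousLinearMap with hTdef
  set C : ℝ := ‖T‖ with hCdef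
  have hC : 0 ≤ C := norm_nonneg _
  have hbound : ∀ a b : E, |(star (e a) ⬝ᵥ M *ᵥ e b).re| ≤ C * (‖a‖ * ‖b‖) := by
    intro a b
    have h1 : star (e a) ⬝ᵥ M *ᵥ e b = (inner ℂ a (T b) : ℂ) := by
      rw [EuclideanSpace.inner_eq_star_dotProduct, dotProduct_comm]; rfl
    rw [h1]
    calc |(inner ℂ a (T b) : ℂ).re| ≤ ‖(inner ℂ a (T b) : ℂ)‖ :=
          Complex.abs_re_le_norm _
      _ = ‖(inner ℂ a (T b) : ℂ)‖ := rfl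
      _ ≤ ‖a‖ * ‖T b‖ := norm_inner_le_norm _ _
      _ ≤ ‖a‖ * (C * ‖b‖) := by
          have := T.le_opNorm b
          nlinarith [norm_nonneg a]
      _ = C * (‖a‖ * ‖b‖) := by ring
  -- choose τ
  refine ⟨(C + C * C / d) / c + 1, by positivity, ?_⟩
  have hermS : (M + ((C + C * C / d) / c + 1 : ℝ) • R).IsHermitian := by
    apply hM.add
    show (((C + C * C / d) / c + 1 : ℝ) • R)ᴴ = _
    rw [Matrix.conjTranspose_smul, star_trivial, hR.1.eq]
  set τ : ℝ := (C + C * C / d) / c + 1 with hτdef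
  refine Matrix.PosSemidef.of_dotProduct_mulVec_nonneg hermS (fun x => ?_)
  -- decompose x
  set X : E := e.symm x with hXdef
  set u : E := (K.orthogonalProjection X : E) with hudef
  set v : E := X - u with hvdef
  set u₀ : E := (K₀.orthogonalProjection u : E) with hu₀def
  set u₁ : E := u - u₀ with hu₁def
  have huK : u ∈ K := Submodule.coe_mem _
  have hvK : v ∈ Kᗮ := Submodule.sub_starProjection_mem_orthogonal (K := K) X
  have hu₀K₀ : u₀ ∈ K₀ := Submodule.coe_mem _
  have hu₁mem : u₁ ∈ K ⊓ K₀ᗮ := by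
    refine Submodule.mem_inf.mpr ⟨?_, Submodule.sub_starProjection_mem_orthogonal (K := K₀) u⟩
    exact Submodule.sub_mem K huK ((Submodule.mem_inf.mp hu₀K₀).1)
  have hRu₀ : R *ᵥ e u₀ = 0 := ((hK₀mem u₀).mp hu₀K₀).1
  have hMu₀ : M *ᵥ e u₀ = 0 := ((hK₀mem u₀).mp hu₀K₀).2
  have hRu₁ : R *ᵥ e u₁ = 0 := (hKmem u₁).mp (Submodule.mem_inf.mp hu₁mem).1
  have hx : x = e u₀ + e u₁ + e v := by
    have h1 : u₀ + u₁ + v = X := by rw [hu₁def, hvdef]; abel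
    have h2 : e X = x := e.apply_symm_apply x
    rw [← h2, ← h1]; rfl
  -- abbreviations for the five scalar terms
  set z₀ : Fin N → ℂ := e u₀ with hz₀
  set z₁ : Fin N → ℂ := e u₁ with hz₁
  set zv : Fin N → ℂ := e v with hzv
  have hcross₀ : ∀ w, star z₀ ⬝ᵥ M *ᵥ w = 0 := herm_cross_zero hM hMu₀
  have hcrossR₀ : ∀ w, star z₀ ⬝ᵥ R *ᵥ w = 0 := herm_cross_zero hR.1 hRu₀
  have hcrossR₁ : ∀ w, star z₁ ⬝ᵥ R *ᵥ w = 0 := herm_cross_zero hR.1 hRu₁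
  have hq : star x ⬝ᵥ (M + τ • R) *ᵥ x
      = star z₁ ⬝ᵥ M *ᵥ z₁ + star z₁ ⬝ᵥ M *ᵥ zv + star zv ⬝ᵥ M *ᵥ z₁
        + star zv ⬝ᵥ M *ᵥ zv + (τ : ℂ) * (star zv ⬝ᵥ R *ᵥ zv) := by
    rw [hx]
    simp only [add_mulVec, Matrix.smul_mulVec, mulVec_add, star_add,
      add_dotProduct, dotProduct_add, dotProduct_smul, hMu₀, hRu₀, hRu₁,
      mulVec_zero, dotProduct_zero, hcross₀, hcrossR₀, hcrossR₁, add_zero, zero_add,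
      smul_add, smul_zero]
    rw [Complex.real_smul]
    ring
  rw [hq]
  -- real and imaginary parts
  have hB : (star zv ⬝ᵥ M *ᵥ z₁).re = (star z₁ ⬝ᵥ M *ᵥ zv).re := by
    rw [← herm_star_dot hM z₁ zv]
    exact Complex.conj_re _
  have hA1 : d * ‖u₁‖ ^ 2 ≤ (star z₁ ⬝ᵥ M *ᵥ z₁).re := hdle u₁ hu₁mem
  have hRr : c * ‖v‖ ^ 2 ≤ (star zv ⬝ᵥ R *ᵥ zv).re := hcle v hvK
  have hB1 : |(star z₁ ⬝ᵥ M *ᵥ zv).re| ≤ C * (‖u₁‖ * ‖v‖) := hbound u₁ v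
  have hCc : |(star zv ⬝ᵥ M *ᵥ zv).re| ≤ C * (‖v‖ * ‖v‖) := hbound v v
  have hτc : τ * c = C + C * C / d + c := by
    rw [hτdef]; field_simp
    try ring
  rw [Complex.nonneg_iff]
  constructor
  · simp only [Complex.add_re, Complex.mul_re, Complex.ofReal_re, Complex.ofReal_im,
      zero_mul, sub_zero]
    rw [hB]
    have hτpos : (0:ℝ) < τ := by rw [hτdef]; positivity
    have h5 : τ * (c * ‖v‖ ^ 2) ≤ τ * (star zv ⬝ᵥ R *ᵥ zv).re := by
      apply mul_le_mul_of_nonneg_left hRr (le_of_lt hτpos)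
    have habs1 := abs_le.mp hB1
    have habs2 := abs_le.mp hCc
    have hdC : τ * c * d = C * d + C * C + c * d := by
      rw [hτc]; field_simp
      try ring
    nlinarith [sq_nonneg (d * ‖u₁‖ - C * ‖v‖), norm_nonneg u₁, norm_nonneg v,
      mul_pos hc hd, sq_nonneg ‖v‖, mul_nonneg (mul_nonneg hC (norm_nonneg u₁)) (norm_nonneg v)]
  · -- imaginary part
    simp only [Complex.add_im, Complex.mul_im, Complex.ofReal_re, Complex.ofReal_im,
      zero_mul, add_zero]
    rw [hreal M hM z₁, hreal M hM zv, hreal R hR.1 zv]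
    have : (star z₁ ⬝ᵥ M *ᵥ zv).im + (star zv ⬝ᵥ M *ᵥ z₁).im = 0 := by
      have h := herm_star_dot hM z₁ zv
      have h2 := congrArg Complex.im h
      rw [show star (star z₁ ⬝ᵥ M *ᵥ zv) = (starRingEnd ℂ) (star z₁ ⬝ᵥ M *ᵥ zv) from rfl,
        Complex.conj_im] at h2
      linarith
    linarith
end

section
/- Let L_A be the Lindbladian L_A(X) = -i[H_A, X] + Σ_μ D_{L_μ}(X) and let F, ρ̄ be matrices with L_A(ρ̄) = 0. Then F·L_A(ρ̄ F†) + L_A(F ρ̄)·F† = L_A(F ρ̄ F†) - Σ_μ [L_μ, F] ρ̄ [L_μ, F]†. -/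
open Matrix Complex

/-- The Lindbladian with Hamiltonian `H` and jump operators `L μ`. -/
noncomputable def lindbladian16 {n m : ℕ} (H : Matrix (Fin n) (Fin n) ℂ)
    (L : Fin m → Matrix (Fin n) (Fin n) ℂ) (X : Matrix (Fin n) (Fin n) ℂ) :
    Matrix (Fin n) (Fin n) ℂ :=
  (-I) • (H * X - X * H)
    + ∑ μ : Fin m,
        (L μ * X * (L μ)ᴴ - (1 / 2 : ℂ) • ((L μ)ᴴ * L μ * X)
          - (1 / 2 : ℂ) • (X * ((L μ)ᴴ * L μ)))

noncomputable def diss16 {n : ℕ} (Lm X : Matrix (Fin n) (Fin n) ℂ) :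
    Matrix (Fin n) (Fin n) ℂ :=
  Lm * X * Lmᴴ - (1 / 2 : ℂ) • (Lmᴴ * Lm * X) - (1 / 2 : ℂ) • (X * (Lmᴴ * Lm))

lemma diss16_key {n : ℕ} (Lm F ρ : Matrix (Fin n) (Fin n) ℂ) :
    F * diss16 Lm (ρ * Fᴴ) + diss16 Lm (F * ρ) * Fᴴ
      + (Lm * F - F * Lm) * ρ * (Lm * F - F * Lm)ᴴ
    = diss16 Lm (F * ρ * Fᴴ) + F * diss16 Lm ρ * Fᴴ := by
  simp only [diss16, conjTranspose_sub, conjTranspose_mul, mul_sub, sub_mul, mul_add, add_mul,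
    mul_smul_comm, smul_mul_assoc, mul_assoc]
  abel

lemma ham16_key {n : ℕ} (H F ρ : Matrix (Fin n) (Fin n) ℂ) :
    F * ((-I) • (H * (ρ * Fᴴ) - (ρ * Fᴴ) * H)) + ((-I) • (H * (F * ρ) - (F * ρ) * H)) * Fᴴ
    = (-I) • (H * (F * ρ * Fᴴ) - (F * ρ * Fᴴ) * H) + F * ((-I) • (H * ρ - ρ * H)) * Fᴴ := by
  simp only [smul_sub, mul_sub, sub_mul, mul_smul_comm, smul_mul_assoc, mul_assoc]
  abel

/-- If `L_A(ρ̄) = 0`, then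
`F L_A(ρ̄ Fᴴ) + L_A(F ρ̄) Fᴴ = L_A(F ρ̄ Fᴴ) - Σ_μ [L_μ, F] ρ̄ [L_μ, F]ᴴ`. -/
theorem stmt_16 (n m : ℕ)
    (HA : Matrix (Fin n) (Fin n) ℂ) (hHA : HA.IsHermitian)
    (L : Fin m → Matrix (Fin n) (Fin n) ℂ)
    (F ρbar : Matrix (Fin n) (Fin n) ℂ)
    (hss : lindbladian16 HA L ρbar = 0) :
    F * lindbladian16 HA L (ρbar * Fᴴ) + lindbladian16 HA L (F * ρbar) * Fᴴ
      = lindbladian16 HA L (F * ρbar * Fᴴ)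
        - ∑ μ : Fin m, (L μ * F - F * L μ) * ρbar * (L μ * F - F * L μ)ᴴ := by
  have h0 : F * lindbladian16 HA L ρbar * Fᴴ = 0 := by rw [hss]; simp
  rw [eq_sub_iff_add_eq]
  have key :
      F * lindbladian16 HA L (ρbar * Fᴴ) + lindbladian16 HA L (F * ρbar) * Fᴴ
        + ∑ μ : Fin m, (L μ * F - F * L μ) * ρbar * (L μ * F - F * L μ)ᴴ
      = lindbladian16 HA L (F * ρbar * Fᴴ) + F * lindbladian16 HA L ρbar * Fᴴ := by
    show F * ((-I) • (HA * (ρbar * Fᴴ) - (ρbar * Fᴴ) * HA) + ∑ μ : Fin m, diss16 (L μ) (ρbar * Fᴴ))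
        + ((-I) • (HA * (F * ρbar) - (F * ρbar) * HA) + ∑ μ : Fin m, diss16 (L μ) (F * ρbar)) * Fᴴ
        + ∑ μ : Fin m, (L μ * F - F * L μ) * ρbar * (L μ * F - F * L μ)ᴴ
      = ((-I) • (HA * (F * ρbar * Fᴴ) - (F * ρbar * Fᴴ) * HA) + ∑ μ : Fin m, diss16 (L μ) (F * ρbar * Fᴴ))
        + F * ((-I) • (HA * ρbar - ρbar * HA) + ∑ μ : Fin m, diss16 (L μ) ρbar) * Fᴴ
    simp only [mul_add, add_mul, Finset.mul_sum, Finset.sum_mul]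
    have hh := ham16_key HA F ρbar
    have hs : (∑ i : Fin m, F * diss16 (L i) (ρbar * Fᴴ))
          + (∑ i : Fin m, diss16 (L i) (F * ρbar) * Fᴴ)
          + ∑ μ : Fin m, (L μ * F - F * L μ) * ρbar * (L μ * F - F * L μ)ᴴ
        = (∑ μ : Fin m, diss16 (L μ) (F * ρbar * Fᴴ))
          + ∑ i : Fin m, F * diss16 (L i) ρbar * Fᴴ := by
      rw [← Finset.sum_add_distrib, ← Finset.sum_add_distrib, ← Finset.sum_add_distrib]
      exact Finset.sum_congr rfl fun μ _ => diss16_key _ _ _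
    calc F * (-I) • (HA * (ρbar * Fᴴ) - ρbar * Fᴴ * HA)
            + (∑ i : Fin m, F * diss16 (L i) (ρbar * Fᴴ))
            + ((-I) • (HA * (F * ρbar) - F * ρbar * HA) * Fᴴ
              + ∑ i : Fin m, diss16 (L i) (F * ρbar) * Fᴴ)
            + ∑ μ : Fin m, (L μ * F - F * L μ) * ρbar * (L μ * F - F * L μ)ᴴ
        = (F * ((-I) • (HA * (ρbar * Fᴴ) - (ρbar * Fᴴ) * HA))
            + ((-I) • (HA * (F * ρbar) - (F * ρbar) * HA)) * Fᴴ)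
          + ((∑ i : Fin m, F * diss16 (L i) (ρbar * Fᴴ))
            + (∑ i : Fin m, diss16 (L i) (F * ρbar) * Fᴴ)
            + ∑ μ : Fin m, (L μ * F - F * L μ) * ρbar * (L μ * F - F * L μ)ᴴ) := by abel
      _ = ((-I) • (HA * (F * ρbar * Fᴴ) - (F * ρbar * Fᴴ) * HA)
            + F * ((-I) • (HA * ρbar - ρbar * HA)) * Fᴴ)
          + ((∑ μ : Fin m, diss16 (L μ) (F * ρbar * Fᴴ))
            + ∑ i : Fin m, F * diss16 (L i) ρbar * Fᴴ) := by rw [hh, hs]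
      _ = _ := by abel
  rw [key, h0, add_zero]
end
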